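/- arXiv:2205.08208 — 4 statements merged into one kernel-verified Lean document; each statement's English description precedes it below -/
import Mathlib

section
/- Let Ω be an n×n real symmetric positive definite matrix and let 0 ≤ θ₁ < θ₂ be real numbers such that Ω − θ₂Iₙ is positive definite (hence also Ω − θ₁Iₙ). Then γ(Ω, θ₁) < γ(Ω, θ₂); that is, the map θ ↦ γ(Ω, θ) is strictly increasing on the set {θ ≥ 0 : Ω − θIₙ positive definite}. -/
/-- The function γ(Ω, θ) = (1/2)(tr((I − θΩ⁻¹)⁻¹ − I) + log det(I − θΩ⁻¹)). -/
noncomputable def gammaFn {n : ℕ} (Ω : Matrix (Fin n) (Fin n) ℝ) (θ : ℝ) : ℝ :=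
  (1 / 2) * (Matrix.trace ((1 - θ • Ω⁻¹)⁻¹ - 1) + Real.log ((1 - θ • Ω⁻¹).det))

open Matrix Finset


lemma f_strict {a b : ℝ} (ha : 0 < a) (hab : a < b) (hb1 : b ≤ 1) :
    b⁻¹ - 1 + Real.log b < a⁻¹ - 1 + Real.log a := by
  have key : StrictAntiOn (fun x : ℝ => x⁻¹ + Real.log x) (Set.Icc a 1) := by
    apply strictAntiOn_of_deriv_neg (convex_Icc a 1)
    · intro x hx
      have hx0 : x ≠ 0 := (lt_of_lt_of_le ha hx.1).ne'
      exact ((continuousAt_inv₀ hx0).add (Real.continuousAt_log hx0)).continuousWithinAt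
    · intro x hx
      rw [interior_Icc] at hx
      have hx0 : 0 < x := ha.trans hx.1
      have hd : HasDerivAt (fun x : ℝ => x⁻¹ + Real.log x) (-(x^2)⁻¹ + x⁻¹) x :=
        (hasDerivAt_inv hx0.ne').add (Real.hasDerivAt_log hx0.ne')
      rw [hd.deriv]
      have h1 : x⁻¹ < (x^2)⁻¹ := by
        rw [pow_two, mul_inv]
        nlinarith [inv_pos.2 hx0, (one_lt_inv₀ hx0).2 hx.2]
      linarith
  have h := key ⟨le_refl a, hab.le.trans hb1⟩ ⟨hab.le, hb1⟩ hab
  simp only at h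
  linarith

lemma posdef_conj {n : ℕ} {A U : Matrix (Fin n) (Fin n) ℝ} (hA : A.PosDef)
    (hUU : star U * U = 1) : ((star U) * A * U).PosDef := by
  rw [Matrix.posDef_iff_dotProduct_mulVec]
  constructor
  · have := Matrix.isHermitian_conjTranspose_mul_mul U hA.1
    simpa [Matrix.star_eq_conjTranspose] using this
  · intro x hx
    have hx' : U *ᵥ x ≠ 0 := by
      intro h
      apply hx
      have := congrArg (fun v => (star U) *ᵥ v) h
      simpa [Matrix.mulVec_mulVec, hUU] using this
    simpa only [Matrix.star_eq_conjTranspose, Matrix.star_mulVec, Matrix.dotProduct_mulVec,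
      Matrix.vecMul_vecMul] using hA.dotProduct_mulVec_pos hx'

lemma conj_mul_conj {n : ℕ} {U : Matrix (Fin n) (Fin n) ℝ} (hUU : star U * U = 1)
    (A B : Matrix (Fin n) (Fin n) ℝ) :
    (U * A * star U) * (U * B * star U) = U * (A * B) * star U := by
  have : star U * (U * (B * star U)) = B * star U := by
    rw [← Matrix.mul_assoc, hUU, Matrix.one_mul]
  simp only [Matrix.mul_assoc, this]

lemma gamma_eq {n : ℕ} (Ω : Matrix (Fin n) (Fin n) ℝ) (hΩ : Ω.PosDef) (θ : ℝ)
    (hθ : ∀ i, θ < hΩ.1.eigenvalues i) :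
    gammaFn Ω θ = (1 / 2) * ∑ i, ((1 - θ * (hΩ.1.eigenvalues i)⁻¹)⁻¹ - 1
      + Real.log (1 - θ * (hΩ.1.eigenvalues i)⁻¹)) := by
  classical
  set μ := hΩ.1.eigenvalues with hμdef
  have hμpos : ∀ i, 0 < μ i := hΩ.eigenvalues_pos
  set U : Matrix (Fin n) (Fin n) ℝ := (hΩ.1.eigenvectorUnitary : Matrix (Fin n) (Fin n) ℝ) with hUdef
  have hUU : star U * U = 1 := Matrix.mem_unitaryGroup_iff'.mp (hΩ.1.eigenvectorUnitary).2
  have hUU' : U * star U = 1 := Matrix.mem_unitaryGroup_iff.mp (hΩ.1.eigenvectorUnitary).2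
  have hspec : Ω = U * diagonal μ * star U := by
    simpa [RCLike.ofReal_real_eq_id] using hΩ.1.spectral_theorem
  set w : Fin n → ℝ := fun i => 1 - θ * (μ i)⁻¹ with hwdef
  have hw0 : ∀ i, 0 < w i := by
    intro i
    have : θ * (μ i)⁻¹ < 1 := by
      rw [← div_eq_mul_inv]
      exact (div_lt_one (hμpos i)).2 (hθ i)
    simpa [hwdef] using sub_pos.2 this
  have hdiagmul : diagonal (fun i => (μ i)⁻¹) * diagonal μ = 1 := by
    rw [Matrix.diagonal_mul_diagonal]
    rw [show (fun i => (μ i)⁻¹ * μ i) = fun _ => (1:ℝ) from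
      funext fun i => inv_mul_cancel₀ (hμpos i).ne', Matrix.diagonal_one]
  have hinv : Ω⁻¹ = U * diagonal (fun i => (μ i)⁻¹) * star U := by
    apply Matrix.inv_eq_left_inv
    rw [hspec, conj_mul_conj hUU, hdiagmul, Matrix.mul_one, hUU']
  have hmain : 1 - θ • Ω⁻¹ = U * diagonal w * star U := by
    rw [hinv]
    have h1 : (1 : Matrix (Fin n) (Fin n) ℝ) = U * 1 * star U := by
      rw [Matrix.mul_one, hUU']
    rw [show θ • (U * diagonal (fun i => (μ i)⁻¹) * star U)
        = U * (θ • diagonal (fun i => (μ i)⁻¹)) * star U from by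
      rw [← Matrix.smul_mul, ← Matrix.mul_smul], h1,
      ← Matrix.sub_mul, ← Matrix.mul_sub]
    congr 1
    congr 1
    rw [← Matrix.diagonal_one, ← Matrix.diagonal_smul, ← Matrix.diagonal_sub]
    congr 1
  have hwdiagmul : diagonal (fun i => (w i)⁻¹) * diagonal w = 1 := by
    rw [Matrix.diagonal_mul_diagonal]
    rw [show (fun i => (w i)⁻¹ * w i) = fun _ => (1:ℝ) from
      funext fun i => inv_mul_cancel₀ (hw0 i).ne', Matrix.diagonal_one]
  have hMinv : (1 - θ • Ω⁻¹)⁻¹ = U * diagonal (fun i => (w i)⁻¹) * star U := by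
    apply Matrix.inv_eq_left_inv
    rw [hmain, conj_mul_conj hUU, hwdiagmul, Matrix.mul_one, hUU']
  have htr : Matrix.trace ((1 - θ • Ω⁻¹)⁻¹ - 1) = ∑ i, ((w i)⁻¹ - 1) := by
    rw [hMinv]
    have h1 : (1 : Matrix (Fin n) (Fin n) ℝ) = U * 1 * star U := by
      rw [Matrix.mul_one, hUU']
    rw [h1, ← Matrix.sub_mul, ← Matrix.mul_sub, Matrix.trace_mul_cycle, hUU, Matrix.one_mul, ← Matrix.diagonal_one, Matrix.diagonal_sub, Matrix.trace_diagonal]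
  have hdet : (1 - θ • Ω⁻¹).det = ∏ i, w i := by
    rw [hmain, Matrix.det_mul, Matrix.det_mul]
    have h2 : U.det * (star U).det = 1 := by rw [← Matrix.det_mul, hUU', Matrix.det_one]
    calc U.det * (diagonal w).det * (star U).det
        = (diagonal w).det * (U.det * (star U).det) := by ring
      _ = ∏ i, w i := by rw [h2, mul_one, Matrix.det_diagonal]
  have hlog : Real.log ((1 - θ • Ω⁻¹).det) = ∑ i, Real.log (w i) := by
    rw [hdet, Real.log_prod]
    exact fun i _ => (hw0 i).ne'
  rw [gammaFn, htr, hlog, ← Finset.sum_add_distrib]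

theorem stmt1 {n : ℕ} (hn : 0 < n) (Ω : Matrix (Fin n) (Fin n) ℝ)
    (hΩ : Ω.PosDef) (θ₁ θ₂ : ℝ) (hθ₁ : 0 ≤ θ₁) (h12 : θ₁ < θ₂)
    (hpd₂ : (Ω - θ₂ • (1 : Matrix (Fin n) (Fin n) ℝ)).PosDef) :
    gammaFn Ω θ₁ < gammaFn Ω θ₂ := by
  classical
  set μ := hΩ.1.eigenvalues with hμdef
  have hμpos : ∀ i, 0 < μ i := hΩ.eigenvalues_pos
  set U : Matrix (Fin n) (Fin n) ℝ := (hΩ.1.eigenvectorUnitary : Matrix (Fin n) (Fin n) ℝ)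
    with hUdef
  have hUU : star U * U = 1 := Matrix.mem_unitaryGroup_iff'.mp (hΩ.1.eigenvectorUnitary).2
  have hUU' : U * star U = 1 := Matrix.mem_unitaryGroup_iff.mp (hΩ.1.eigenvectorUnitary).2
  have hdiag : star U * Ω * U = diagonal μ := by
    simpa [RCLike.ofReal_real_eq_id, Unitary.coe_star] using hΩ.1.conjStarAlgAut_star_eigenvectorUnitary
  -- eigenvalue bound
  have hμ2 : ∀ i, θ₂ < μ i := by
    have hpdD : (star U * (Ω - θ₂ • (1 : Matrix (Fin n) (Fin n) ℝ)) * U).PosDef :=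
      posdef_conj hpd₂ hUU
    have heq : star U * (Ω - θ₂ • (1 : Matrix (Fin n) (Fin n) ℝ)) * U
        = diagonal (fun i => μ i - θ₂) := by
      have hs : star U * (θ₂ • (1 : Matrix (Fin n) (Fin n) ℝ)) * U
          = θ₂ • (1 : Matrix (Fin n) (Fin n) ℝ) := by
        rw [Matrix.mul_smul, Matrix.mul_one, Matrix.smul_mul, hUU]
      rw [Matrix.mul_sub, Matrix.sub_mul, hdiag, hs]
      ext i j
      by_cases h : i = j <;>
        simp [Matrix.diagonal_apply, Matrix.one_apply, h]
    rw [heq] at hpdD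
    intro i
    have := Matrix.posDef_diagonal_iff.mp hpdD i
    linarith
  have hμ1 : ∀ i, θ₁ < μ i := fun i => h12.trans (hμ2 i)
  rw [gamma_eq Ω hΩ θ₁ hμ1, gamma_eq Ω hΩ θ₂ hμ2]
  have hne : (Finset.univ : Finset (Fin n)).Nonempty := by
    have : Nonempty (Fin n) := Fin.pos_iff_nonempty.mp hn
    exact Finset.univ_nonempty
  have hsum : ∑ i, ((1 - θ₁ * (μ i)⁻¹)⁻¹ - 1 + Real.log (1 - θ₁ * (μ i)⁻¹))
      < ∑ i, ((1 - θ₂ * (μ i)⁻¹)⁻¹ - 1 + Real.log (1 - θ₂ * (μ i)⁻¹)) := by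
    apply Finset.sum_lt_sum_of_nonempty hne
    intro i _
    have hμi := hμpos i
    have ha : 0 < 1 - θ₂ * (μ i)⁻¹ := by
      have : θ₂ * (μ i)⁻¹ < 1 := by
        rw [← div_eq_mul_inv]; exact (div_lt_one hμi).2 (hμ2 i)
      linarith
    have hab : 1 - θ₂ * (μ i)⁻¹ < 1 - θ₁ * (μ i)⁻¹ := by
      have : θ₁ * (μ i)⁻¹ < θ₂ * (μ i)⁻¹ :=
        mul_lt_mul_of_pos_right h12 (inv_pos.2 hμi)
      linarith
    have hb1 : 1 - θ₁ * (μ i)⁻¹ ≤ 1 := by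
      have : 0 ≤ θ₁ * (μ i)⁻¹ := mul_nonneg hθ₁ (inv_pos.2 hμi).le
      linarith
    exact f_strict ha hab hb1
  linarith
end

section
/- Let Ω be an n×n real symmetric positive definite matrix with least eigenvalue λ_min(Ω). Then γ(Ω, θ) tends to +∞ as θ tends to λ_min(Ω) from below (with θ ranging over [0, λ_min(Ω)), on which Ω − θIₙ is positive definite). -/
open Matrix Filter Real in
lemma auxF : Tendsto (fun y : ℝ => y - Real.log y) atTop atTop := by
  apply tendsto_atTop_mono' atTop
    (show ∀ᶠ y : ℝ in atTop, y / 2 ≤ y - Real.log y from ?_)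
  · exact Tendsto.atTop_div_const two_pos tendsto_id
  · filter_upwards [eventually_ge_atTop (1:ℝ)] with y hy
    have hy0 : (0:ℝ) ≤ y := by linarith
    have hs : Real.log (Real.sqrt y) ≤ Real.sqrt y - 1 :=
      Real.log_le_sub_one_of_pos (Real.sqrt_pos.2 (by linarith))
    have hls : Real.log (Real.sqrt y) = Real.log y / 2 := Real.log_sqrt hy0
    nlinarith [sq_nonneg (Real.sqrt y - 2), Real.sq_sqrt hy0, Real.sqrt_nonneg y]

open Matrix Filter Real

lemma key_id {n : ℕ} (Ω : Matrix (Fin n) (Fin n) ℝ) (hΩ : Ω.PosDef) {θ : ℝ}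
    (hθ : ∀ i, 0 < 1 - θ * (hΩ.1.eigenvalues i)⁻¹) :
    gammaFn Ω θ = (1/2) * ∑ i, ((1 - θ * (hΩ.1.eigenvalues i)⁻¹)⁻¹ - 1
      + Real.log (1 - θ * (hΩ.1.eigenvalues i)⁻¹)) := by
  classical
  set lv := hΩ.1.eigenvalues with hlv
  set U : Matrix (Fin n) (Fin n) ℝ := (hΩ.1.eigenvectorUnitary : Matrix (Fin n) (Fin n) ℝ) with hUdef
  have hpos : ∀ i, 0 < lv i := fun i => hΩ.eigenvalues_pos i
  set d : Fin n → ℝ := fun i => 1 - θ * (lv i)⁻¹ with hddef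
  have hdne : ∀ i, d i ≠ 0 := fun i => ne_of_gt (hθ i)
  have hU1 : U * star U = 1 := (Matrix.mem_unitaryGroup_iff).mp hΩ.1.eigenvectorUnitary.2
  have hU2 : star U * U = 1 := (Matrix.mem_unitaryGroup_iff').mp hΩ.1.eigenvectorUnitary.2
  have hspec : Ω = U * Matrix.diagonal lv * star U := by
    simpa using hΩ.1.spectral_theorem
  have sandwich : ∀ v w : Fin n → ℝ,
      (U * Matrix.diagonal v * star U) * (U * Matrix.diagonal w * star U)
        = U * Matrix.diagonal (fun i => v i * w i) * star U := by
    intro v w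
    simp only [Matrix.mul_assoc]
    rw [← Matrix.mul_assoc (star U) U, hU2, Matrix.one_mul,
      ← Matrix.mul_assoc (Matrix.diagonal v), Matrix.diagonal_mul_diagonal]
  have hinv : Ω⁻¹ = U * Matrix.diagonal (fun i => (lv i)⁻¹) * star U := by
    apply Matrix.inv_eq_right_inv
    rw [hspec, sandwich]
    have : (fun i => lv i * (lv i)⁻¹) = fun _ => (1:ℝ) := by
      funext i; exact mul_inv_cancel₀ (ne_of_gt (hpos i))
    rw [this, Matrix.diagonal_one, mul_one, hU1]
  have hM : (1 : Matrix (Fin n) (Fin n) ℝ) - θ • Ω⁻¹ = U * Matrix.diagonal d * star U := by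
    rw [hinv]
    have h1 : (1 : Matrix (Fin n) (Fin n) ℝ) = U * Matrix.diagonal (fun _ => (1:ℝ)) * star U := by
      rw [Matrix.diagonal_one, mul_one, hU1]
    have h2 : θ • (U * Matrix.diagonal (fun i => (lv i)⁻¹) * star U)
        = U * (θ • Matrix.diagonal fun i => (lv i)⁻¹) * star U := by
      rw [mul_smul_comm, smul_mul_assoc]
    have hdd : Matrix.diagonal (fun _ : Fin n => (1:ℝ)) - θ • Matrix.diagonal (fun i => (lv i)⁻¹)
        = Matrix.diagonal d := by
      ext i j
      by_cases h : i = j <;>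
        simp [h, Matrix.diagonal_apply, Matrix.one_apply, Matrix.sub_apply, d]
    conv_lhs => rw [h1, h2]
    rw [← Matrix.sub_mul, ← Matrix.mul_sub, hdd]
  have hMinv : ((1 : Matrix (Fin n) (Fin n) ℝ) - θ • Ω⁻¹)⁻¹
      = U * Matrix.diagonal (fun i => (d i)⁻¹) * star U := by
    apply Matrix.inv_eq_right_inv
    rw [hM, sandwich]
    have : (fun i => d i * (d i)⁻¹) = fun _ => (1:ℝ) := by
      funext i; exact mul_inv_cancel₀ (hdne i)
    rw [this, Matrix.diagonal_one, mul_one, hU1]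
  have htr : Matrix.trace (((1 : Matrix (Fin n) (Fin n) ℝ) - θ • Ω⁻¹)⁻¹ - 1)
      = ∑ i, ((d i)⁻¹ - 1) := by
    rw [Matrix.trace_sub, hMinv, Matrix.trace_mul_cycle, hU2, one_mul,
      Matrix.trace_diagonal, Matrix.trace_one, Finset.sum_sub_distrib]
    simp
  have hdet : ((1 : Matrix (Fin n) (Fin n) ℝ) - θ • Ω⁻¹).det = ∏ i, d i := by
    rw [hM, Matrix.det_mul, Matrix.det_mul, mul_comm, ← mul_assoc, ← Matrix.det_mul, hU2]
    simp
  have hlog : Real.log (((1 : Matrix (Fin n) (Fin n) ℝ) - θ • Ω⁻¹).det) = ∑ i, Real.log (d i) := by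
    rw [hdet, Real.log_prod (fun i _ => hdne i)]
  rw [gammaFn, htr, hlog, ← Finset.sum_add_distrib]

theorem stmt2 {n : ℕ} (hn : 0 < n) (Ω : Matrix (Fin n) (Fin n) ℝ)
    (hΩ : Ω.PosDef) (lmin : ℝ)
    (hlmin : lmin = ⨅ i : Fin n, hΩ.1.eigenvalues i) :
    Filter.Tendsto (fun θ => gammaFn Ω θ)
      (nhdsWithin lmin (Set.Ico 0 lmin)) Filter.atTop := by
  classical
  have hne : Nonempty (Fin n) := ⟨⟨0, hn⟩⟩
  set lv := hΩ.1.eigenvalues with hlv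
  have hpos : ∀ i, 0 < lv i := fun i => hΩ.eigenvalues_pos i
  have hbdd : BddBelow (Set.range lv) := (Set.finite_range lv).bddBelow
  have hle : ∀ i, lmin ≤ lv i := fun i => hlmin ▸ ciInf_le hbdd i
  obtain ⟨i₀, hi₀⟩ := exists_eq_ciInf_of_finite (f := lv)
  have hi₀' : lv i₀ = lmin := by rw [hi₀, hlmin]
  have hlpos : 0 < lmin := hi₀' ▸ hpos i₀
  set φ : ℝ → ℝ :=
    fun θ => (1/2) * ((1 - θ * lmin⁻¹)⁻¹ - 1 + Real.log (1 - θ * lmin⁻¹)) with hφ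
  have hmono : ∀ᶠ θ in nhdsWithin lmin (Set.Ico 0 lmin), φ θ ≤ gammaFn Ω θ := by
    filter_upwards [eventually_mem_nhdsWithin] with θ hθ
    obtain ⟨hθ0, hθl⟩ := hθ
    have hdpos : ∀ i, 0 < 1 - θ * (lv i)⁻¹ := by
      intro i
      have h1 : θ * (lv i)⁻¹ < 1 := by
        rw [← div_eq_mul_inv]
        exact (div_lt_one (hpos i)).2 (lt_of_lt_of_le hθl (hle i))
      linarith
    rw [key_id Ω hΩ hdpos]
    have hterm : ∀ i, 0 ≤ (1 - θ * (lv i)⁻¹)⁻¹ - 1 + Real.log (1 - θ * (lv i)⁻¹) := by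
      intro i
      have := Real.one_sub_inv_le_log_of_pos (hdpos i)
      linarith
    have h2 : (1 - θ * (lv i₀)⁻¹)⁻¹ - 1 + Real.log (1 - θ * (lv i₀)⁻¹)
        ≤ ∑ i, ((1 - θ * (lv i)⁻¹)⁻¹ - 1 + Real.log (1 - θ * (lv i)⁻¹)) :=
      Finset.single_le_sum (fun i _ => hterm i) (Finset.mem_univ i₀)
    rw [hi₀'] at h2
    simp only [hφ]
    linarith
  apply tendsto_atTop_mono' _ hmono
  have t1 : Filter.Tendsto (fun θ => 1 - θ * lmin⁻¹)
      (nhdsWithin lmin (Set.Ico 0 lmin)) (nhdsWithin 0 (Set.Ioi 0)) := by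
    apply tendsto_nhdsWithin_of_tendsto_nhds_of_eventually_within
    · have hc : Filter.Tendsto (fun θ : ℝ => 1 - θ * lmin⁻¹) (nhds lmin)
          (nhds (1 - lmin * lmin⁻¹)) := by
        exact (continuous_const.sub (continuous_id.mul continuous_const)).tendsto lmin
      rw [mul_inv_cancel₀ (ne_of_gt hlpos), sub_self] at hc
      exact hc.mono_left nhdsWithin_le_nhds
    · filter_upwards [eventually_mem_nhdsWithin] with θ hθ
      have h1 : θ * lmin⁻¹ < 1 := by
        rw [← div_eq_mul_inv]
        exact (div_lt_one hlpos).2 hθ.2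
      simpa using h1
  have t2 := tendsto_inv_nhdsGT_zero.comp t1
  have t3 := auxF.comp t2
  have t4 := Filter.tendsto_atTop_add_const_right _ (-1 : ℝ) t3
  have t5 := Filter.Tendsto.const_mul_atTop (show (0:ℝ) < 1/2 by norm_num) t4
  apply t5.congr
  intro θ
  simp only [hφ, Function.comp]
  rw [Real.log_inv]
  ring
end

section
/- Let X₁ and X₂ be n×n real symmetric positive semidefinite matrices with X₁ ⪯ X₂ (Loewner order) and Iₙ − X₂ positive definite. Then tr((Iₙ − X₁)⁻¹) + log det(Iₙ − X₁) ≤ tr((Iₙ − X₂)⁻¹) + log det(Iₙ − X₂); that is, the map X ↦ tr((Iₙ − X)⁻¹) + log det(Iₙ − X) is monotone nondecreasing in the Loewner order on {X : 0 ⪯ X ≺ Iₙ}. -/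
open Matrix

set_option maxHeartbeats 1000000

lemma trace_nonneg_of_posSemidef {n : ℕ} {M : Matrix (Fin n) (Fin n) ℝ} (hM : M.PosSemidef) :
    0 ≤ M.trace := by
  rw [Matrix.trace]
  refine Finset.sum_nonneg fun i _ => ?_
  simpa using hM.dotProduct_mulVec_nonneg (Pi.single i 1)

open scoped MatrixOrder in
lemma trace_mul_nonneg_of_posSemidef {n : ℕ} {P Q : Matrix (Fin n) (Fin n) ℝ}
    (hP : P.PosSemidef) (hQ : Q.PosSemidef) : 0 ≤ (P * Q).trace := by
  have hS := Matrix.nonneg_iff_posSemidef.mp (CFC.sqrt_nonneg P)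
  have h1 : P * Q = CFC.sqrt P * (CFC.sqrt P * Q) := by
    rw [← mul_assoc, CFC.sqrt_mul_sqrt_self P hP.nonneg]
  rw [h1, Matrix.trace_mul_comm]
  have h2 : (CFC.sqrt P * Q * CFC.sqrt P).PosSemidef := by
    have h3 := hQ.conjTranspose_mul_mul_same (CFC.sqrt P)
    rwa [hS.isHermitian.eq] at h3
  exact trace_nonneg_of_posSemidef h2

lemma trace_eq_sum_eigenvalues' {n : ℕ} {M : Matrix (Fin n) (Fin n) ℝ} (hM : M.IsHermitian) :
    M.trace = ∑ i, hM.eigenvalues i := by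
  conv_lhs => rw [hM.spectral_theorem, Unitary.conjStarAlgAut_apply]
  rw [Matrix.trace_mul_comm, ← mul_assoc,
    (Matrix.mem_unitaryGroup_iff').mp (hM.eigenvectorUnitary).2, one_mul]
  simp [Matrix.trace_diagonal]

lemma log_det_le_trace_sub {n : ℕ} {M : Matrix (Fin n) (Fin n) ℝ} (hM : M.PosDef) :
    Real.log M.det ≤ M.trace - n := by
  have hev : ∀ i, 0 < hM.1.eigenvalues i := hM.eigenvalues_pos
  rw [hM.isHermitian.det_eq_prod_eigenvalues, trace_eq_sum_eigenvalues' hM.isHermitian]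
  simp only [RCLike.ofReal_real_eq_id, id_eq]
  rw [Real.log_prod (fun i _ => (hev i).ne')]
  calc ∑ i, Real.log (hM.1.eigenvalues i) ≤ ∑ i, (hM.1.eigenvalues i - 1) :=
        Finset.sum_le_sum fun i _ => Real.log_le_sub_one_of_pos (hev i)
    _ = ∑ i, hM.1.eigenvalues i - n := by
        rw [Finset.sum_sub_distrib]; simp


open scoped MatrixOrder in
lemma exists_psd_sqrt {n : ℕ} {B : Matrix (Fin n) (Fin n) ℝ} (hB : B.PosSemidef) :
    ∃ R : Matrix (Fin n) (Fin n) ℝ, R.PosSemidef ∧ R * R = B :=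
  ⟨CFC.sqrt B, Matrix.nonneg_iff_posSemidef.mp (CFC.sqrt_nonneg B), CFC.sqrt_mul_sqrt_self B hB.nonneg⟩

theorem stmt5 {n : ℕ} (X₁ X₂ : Matrix (Fin n) (Fin n) ℝ)
    (h₁ : X₁.PosSemidef) (h₂ : X₂.PosSemidef)
    (h12 : (X₂ - X₁).PosSemidef)
    (hlt : ((1 : Matrix (Fin n) (Fin n) ℝ) - X₂).PosDef) :
    Matrix.trace ((1 - X₁)⁻¹) + Real.log ((1 - X₁).det) ≤
      Matrix.trace ((1 - X₂)⁻¹) + Real.log ((1 - X₂).det) := by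
  set A : Matrix (Fin n) (Fin n) ℝ := 1 - X₁ with hA_def
  set B : Matrix (Fin n) (Fin n) ℝ := 1 - X₂ with hB_def
  have hB : B.PosDef := hlt
  have hAB : A - B = X₂ - X₁ := by rw [hA_def, hB_def]; abel
  have hA : A.PosDef := by
    have : A = B + (X₂ - X₁) := by rw [hA_def, hB_def]; abel
    rw [this]; exact hB.add_posSemidef h12
  -- R = sqrt B
  obtain ⟨R, hRps, hRR⟩ := exists_psd_sqrt hB.posSemidef
  have hdetR : IsUnit R.det := by
    have h : R.det * R.det = B.det := by rw [← Matrix.det_mul, hRR]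
    have : R.det ≠ 0 := by
      intro h0; rw [h0, mul_zero] at h; exact (hB.det_pos).ne h
    exact isUnit_iff_ne_zero.mpr this
  have hRinv : R * R⁻¹ = 1 := Matrix.mul_nonsing_inv R hdetR
  have hRinv' : R⁻¹ * R = 1 := Matrix.nonsing_inv_mul R hdetR
  have hRH : R⁻¹ᴴ = R⁻¹ := by
    rw [Matrix.conjTranspose_nonsing_inv, hRps.isHermitian.eq]
  -- C = R⁻¹ A R⁻¹
  set C : Matrix (Fin n) (Fin n) ℝ := R⁻¹ * A * R⁻¹ with hC_def
  have hC : C.PosDef := by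
    have hherm : C.IsHermitian := by
      have h := Matrix.isHermitian_conjTranspose_mul_mul R⁻¹ hA.isHermitian
      rwa [hRH] at h
    refine Matrix.PosDef.of_dotProduct_mulVec_pos hherm (fun x hx => ?_)
    have hx' : R⁻¹ *ᵥ x ≠ 0 := by
      intro h0
      apply hx
      have := congrArg (R *ᵥ ·) h0
      simpa [Matrix.mulVec_mulVec, hRinv] using this
    have h2 := hA.dotProduct_mulVec_pos hx'
    have key : dotProduct (star x) (C *ᵥ x)
        = dotProduct (star (R⁻¹ *ᵥ x)) (A *ᵥ (R⁻¹ *ᵥ x)) := by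
      rw [hC_def]
      simp only [star_mulVec, hRH, dotProduct_mulVec, Matrix.vecMul_vecMul]
    rw [key]
    exact h2
  have hBinv : B⁻¹ = R⁻¹ * R⁻¹ := by rw [← hRR, Matrix.mul_inv_rev]
  -- C - 1 PSD
  have hC1 : (C - 1).PosSemidef := by
    have key : C - 1 = R⁻¹ᴴ * (A - B) * R⁻¹ := by
      rw [hRH, Matrix.mul_sub, Matrix.sub_mul, ← hC_def]
      congr 1
      rw [← hRR]
      symm
      calc R⁻¹ * (R * R) * R⁻¹ = (R⁻¹ * R) * (R * R⁻¹) := by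
            simp only [Matrix.mul_assoc]
        _ = 1 := by rw [hRinv, hRinv', one_mul]
    rw [key]
    exact (hAB ▸ h12).conjTranspose_mul_mul_same R⁻¹
  -- B⁻¹ - C PSD
  have hBC : (B⁻¹ - C).PosSemidef := by
    have key : B⁻¹ - C = R⁻¹ᴴ * (1 - A) * R⁻¹ := by
      rw [hRH, Matrix.mul_sub, Matrix.sub_mul, ← hC_def, hBinv, Matrix.mul_one]
    rw [key]
    have : ((1 : Matrix (Fin n) (Fin n) ℝ) - A).PosSemidef := by
      have : (1 : Matrix (Fin n) (Fin n) ℝ) - A = X₁ := by rw [hA_def]; abel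
      rw [this]; exact h₁
    exact this.conjTranspose_mul_mul_same R⁻¹
  -- 1 - C⁻¹ PSD
  have hCinv1 : ((1 : Matrix (Fin n) (Fin n) ℝ) - C⁻¹).PosSemidef := by
    obtain ⟨T, hTps, hTT⟩ := exists_psd_sqrt hC.posSemidef
    have hdetT : IsUnit T.det := by
      have h : T.det * T.det = C.det := by rw [← Matrix.det_mul, hTT]
      have : T.det ≠ 0 := by
        intro h0; rw [h0, mul_zero] at h; exact (hC.det_pos).ne h
      exact isUnit_iff_ne_zero.mpr this
    have hTinv : T * T⁻¹ = 1 := Matrix.mul_nonsing_inv T hdetT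
    have hTinv' : T⁻¹ * T = 1 := Matrix.nonsing_inv_mul T hdetT
    have hTH : T⁻¹ᴴ = T⁻¹ := by
      rw [Matrix.conjTranspose_nonsing_inv, hTps.isHermitian.eq]
    have key : (1 : Matrix (Fin n) (Fin n) ℝ) - C⁻¹ = T⁻¹ᴴ * (C - 1) * T⁻¹ := by
      rw [hTH, Matrix.mul_sub, Matrix.sub_mul]
      congr 1
      · rw [← hTT]
        symm
        calc T⁻¹ * (T * T) * T⁻¹ = (T⁻¹ * T) * (T * T⁻¹) := by
              simp only [Matrix.mul_assoc]
          _ = 1 := by rw [hTinv, hTinv', one_mul]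
      · rw [Matrix.mul_one, ← hTT, Matrix.mul_inv_rev]
    rw [key]
    exact hC1.conjTranspose_mul_mul_same T⁻¹
  -- A = R * C * R and det A = det B * det C
  have hRCR : R * C * R = A := by
    rw [hC_def]
    calc R * (R⁻¹ * A * R⁻¹) * R = (R * R⁻¹) * (A * (R⁻¹ * R)) := by
          simp only [Matrix.mul_assoc]
      _ = A := by rw [hRinv, hRinv', one_mul, Matrix.mul_one]
  have hdetA : A.det = B.det * C.det := by
    have h1 : A.det = R.det * C.det * R.det := by
      rw [← hRCR, Matrix.det_mul, Matrix.det_mul]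
    have h2 : B.det = R.det * R.det := by rw [← hRR, Matrix.det_mul]
    rw [h1, h2]; ring
  -- trace A⁻¹ = trace (C⁻¹ * B⁻¹)
  have htrA : A⁻¹.trace = (C⁻¹ * B⁻¹).trace := by
    rw [← hRCR, Matrix.mul_inv_rev, Matrix.mul_inv_rev, Matrix.trace_mul_comm, hBinv,
      mul_assoc]
  -- step 1: trace((C⁻¹-1) * B⁻¹) ≤ trace((C⁻¹-1)*C)
  have hstep1 : ((C⁻¹ - 1) * B⁻¹).trace ≤ ((C⁻¹ - 1) * C).trace := by
    have h := trace_mul_nonneg_of_posSemidef hCinv1 hBC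
    have key : (C⁻¹ - 1) * C - (C⁻¹ - 1) * B⁻¹ = (1 - C⁻¹) * (B⁻¹ - C) := by
      noncomm_ring
    have h2 : ((C⁻¹ - 1) * C).trace - ((C⁻¹ - 1) * B⁻¹).trace
        = ((1 - C⁻¹) * (B⁻¹ - C)).trace := by
      rw [← Matrix.trace_sub, key]
    linarith
  -- step 2: trace((C⁻¹-1)*C) = n - trace C
  have hCC : C⁻¹ * C = 1 := Matrix.nonsing_inv_mul C (isUnit_iff_ne_zero.mpr hC.det_pos.ne')
  have hstep2 : ((C⁻¹ - 1) * C).trace = (n : ℝ) - C.trace := by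
    rw [Matrix.sub_mul, hCC, one_mul, Matrix.trace_sub, Matrix.trace_one]
    simp
  -- step 3: log det C ≤ trace C - n
  have hstep3 : Real.log C.det ≤ C.trace - n := log_det_le_trace_sub hC
  -- assemble
  have hlogA : Real.log A.det = Real.log B.det + Real.log C.det := by
    rw [hdetA, Real.log_mul hB.det_pos.ne' hC.det_pos.ne']
  have htr : A⁻¹.trace = B⁻¹.trace + ((C⁻¹ - 1) * B⁻¹).trace := by
    rw [htrA, Matrix.sub_mul, Matrix.trace_sub, one_mul]
    ring
  rw [htr, hlogA]
  have := hstep1.trans_eq hstep2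
  linarith
end

section
/- Let Ω₁ and Ω₂ be n×n real symmetric positive definite matrices with Ω₂ ⪯ Ω₁ (Loewner order), let b > 0, and let θ₁, θ₂ > 0 be the unique positive solutions of γ(Ω₁, θ₁) = b and γ(Ω₂, θ₂) = b with Ω₁ − θ₁Iₙ and Ω₂ − θ₂Iₙ positive definite. Then θ₁ ≥ θ₂; that is, a more informative (larger, in the Loewner order) information matrix yields a larger risk sensitivity parameter for the same tolerance b. -/
open Matrix BigOperators Finset

noncomputable def phi (l θ : ℝ) : ℝ := (1 - θ / l)⁻¹ - 1 + Real.log (1 - θ / l)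

lemma one_sub_div_pos {l θ : ℝ} (hl : 0 < l) (h : θ < l) : 0 < 1 - θ / l := by
  have : θ / l < 1 := (div_lt_one hl).2 h
  linarith

namespace Stmt7Aux

variable {n : ℕ}

lemma phi_zero (l : ℝ) : phi l 0 = 0 := by simp [phi]

lemma hasDerivAt_phi {l θ : ℝ} (hl : 0 < l) (h : θ < l) :
    HasDerivAt (phi l) (θ / (l - θ) ^ 2) θ := by
  have hc : (0:ℝ) < 1 - θ / l := one_sub_div_pos hl h
  have h1 : HasDerivAt (fun t : ℝ => 1 - t / l) (-(1/l)) θ := by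
    simpa [one_div] using ((hasDerivAt_id θ).div_const l).const_sub 1
  have h2 : HasDerivAt (fun t : ℝ => (1 - t/l)⁻¹) (-(-(1/l)) / (1 - θ/l)^2) θ := h1.inv hc.ne'
  have h3 : HasDerivAt (fun t : ℝ => Real.log (1 - t/l)) ((-(1/l)) / (1 - θ/l)) θ :=
    h1.log hc.ne'
  have h4 := (h2.sub_const 1).add h3
  refine h4.congr_deriv ?_
  have hl0 : l ≠ 0 := hl.ne'
  have hlθ : l - θ ≠ 0 := sub_ne_zero.2 h.ne'
  have hc' : 1 - θ / l ≠ 0 := hc.ne'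
  field_simp
  ring

lemma hasDerivAt_sum_phi (lam : Fin n → ℝ) {θ : ℝ} (hl : ∀ i, 0 < lam i)
    (h : ∀ i, θ < lam i) :
    HasDerivAt (fun t => ∑ i, phi (lam i) t) (∑ i, θ / (lam i - θ) ^ 2) θ :=
  HasDerivAt.fun_sum fun i _ => hasDerivAt_phi (hl i) (h i)

/-- strict monotonicity in θ -/
lemma sum_phi_lt (lam : Fin n → ℝ) (hn : 0 < n) (hl : ∀ i, 0 < lam i) {a b : ℝ}
    (ha : 0 < a) (hab : a < b) (hb : ∀ i, b < lam i) :
    ∑ i, phi (lam i) a < ∑ i, phi (lam i) b := by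
  have key : StrictMonoOn (fun t => ∑ i, phi (lam i) t) (Set.Icc a b) := by
    apply strictMonoOn_of_deriv_pos (convex_Icc a b)
    · intro x hx
      have hx' : ∀ i, x < lam i := fun i => lt_of_le_of_lt hx.2 (hb i)
      exact (hasDerivAt_sum_phi lam hl hx').continuousAt.continuousWithinAt
    · intro x hx
      rw [interior_Icc] at hx
      have hx' : ∀ i, x < lam i := fun i => hx.2.trans (hb i)
      rw [(hasDerivAt_sum_phi lam hl hx').deriv]
      have hne : (Finset.univ : Finset (Fin n)).Nonempty := by
        simpa [Finset.univ_nonempty_iff] using Fin.pos_iff_nonempty.mp hn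
      refine Finset.sum_pos (fun i _ => ?_) hne
      have h1 : (0:ℝ) < lam i - x := sub_pos.2 (hx' i)
      have h2 : (0:ℝ) < x := ha.trans hx.1
      exact div_pos h2 (pow_pos h1 2)
  exact key (Set.left_mem_Icc.2 hab.le) (Set.right_mem_Icc.2 hab.le) hab

/-- comparison: if the derivative comparison holds on (0,T), sums compare at T. -/
lemma sum_phi_le (lam mu : Fin n → ℝ) {T : ℝ} (hT : 0 < T)
    (hl0 : ∀ i, 0 < lam i) (hm0 : ∀ i, 0 < mu i)
    (hlT : ∀ i, T < lam i) (hmT : ∀ i, T < mu i)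
    (hcmp : ∀ θ ∈ Set.Ioo (0:ℝ) T, ∑ i, ((lam i - θ)^2)⁻¹ ≤ ∑ i, ((mu i - θ)^2)⁻¹) :
    ∑ i, phi (lam i) T ≤ ∑ i, phi (mu i) T := by
  set g : ℝ → ℝ := fun t => (∑ i, phi (mu i) t) - ∑ i, phi (lam i) t with hg
  have hd : ∀ x ∈ Set.Icc (0:ℝ) T, HasDerivAt g
      ((∑ i, x / (mu i - x) ^ 2) - ∑ i, x / (lam i - x) ^ 2) x := by
    intro x hx
    exact (hasDerivAt_sum_phi mu hm0 (fun i => lt_of_le_of_lt hx.2 (hmT i))).sub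
      (hasDerivAt_sum_phi lam hl0 (fun i => lt_of_le_of_lt hx.2 (hlT i)))
  have key : MonotoneOn g (Set.Icc 0 T) := by
    apply monotoneOn_of_deriv_nonneg (convex_Icc 0 T)
    · exact fun x hx => (hd x hx).continuousAt.continuousWithinAt
    · intro x hx
      rw [interior_Icc] at hx
      exact ((hd x ⟨hx.1.le, hx.2.le⟩).differentiableAt).differentiableWithinAt
    · intro x hx
      rw [interior_Icc] at hx
      rw [(hd x ⟨hx.1.le, hx.2.le⟩).deriv]
      have := hcmp x hx
      have e1 : ∀ (c : Fin n → ℝ), ∑ i, x / (c i - x)^2 = x * ∑ i, ((c i - x)^2)⁻¹ := by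
        intro c
        rw [Finset.mul_sum]
        exact Finset.sum_congr rfl fun i _ => by rw [div_eq_mul_inv]
      rw [e1, e1, sub_nonneg]
      exact mul_le_mul_of_nonneg_left this hx.1.le
  have h0 : g 0 = 0 := by simp [hg, phi_zero]
  have := key (Set.left_mem_Icc.2 hT.le) (Set.right_mem_Icc.2 hT.le) hT.le
  rw [h0] at this
  simpa [hg, sub_nonneg] using this



section conj
variable {U : Matrix (Fin n) (Fin n) ℝ}

lemma conj_mul_conj (hU : U ∈ Matrix.unitaryGroup (Fin n) ℝ) (A B : Matrix (Fin n) (Fin n) ℝ) :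
    (U * A * star U) * (U * B * star U) = U * (A * B) * star U := by
  have h2 : star U * U = 1 := (Matrix.mem_unitaryGroup_iff').mp hU
  calc (U * A * star U) * (U * B * star U)
      = U * (A * ((star U * U) * B)) * star U := by simp only [Matrix.mul_assoc]
    _ = U * (A * B) * star U := by rw [h2, Matrix.one_mul, Matrix.mul_assoc]

lemma trace_conj (hU : U ∈ Matrix.unitaryGroup (Fin n) ℝ) (A : Matrix (Fin n) (Fin n) ℝ) :
    Matrix.trace (U * A * star U) = Matrix.trace A := by
  rw [Matrix.trace_mul_comm, ← Matrix.mul_assoc, (Matrix.mem_unitaryGroup_iff').mp hU,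
    Matrix.one_mul]

lemma det_conj (hU : U ∈ Matrix.unitaryGroup (Fin n) ℝ) (A : Matrix (Fin n) (Fin n) ℝ) :
    (U * A * star U).det = A.det := by
  have h1 : U * star U = 1 := (Matrix.mem_unitaryGroup_iff).mp hU
  have h : U.det * (star U).det = 1 := by rw [← Matrix.det_mul, h1, Matrix.det_one]
  rw [Matrix.det_mul, Matrix.det_mul]
  calc U.det * A.det * (star U).det = A.det * (U.det * (star U).det) := by ring
    _ = A.det := by rw [h, mul_one]

lemma conj_inv (hU : U ∈ Matrix.unitaryGroup (Fin n) ℝ) {d : Fin n → ℝ} (hd : ∀ i, d i ≠ 0) :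
    (U * Matrix.diagonal d * star U)⁻¹ = U * Matrix.diagonal (fun i => (d i)⁻¹) * star U := by
  apply Matrix.inv_eq_right_inv
  rw [conj_mul_conj hU, Matrix.diagonal_mul_diagonal]
  have h : (fun i => d i * (d i)⁻¹) = fun _ => (1:ℝ) := funext fun i => mul_inv_cancel₀ (hd i)
  rw [h, Matrix.diagonal_one, Matrix.mul_one, (Matrix.mem_unitaryGroup_iff).mp hU]

lemma conj_one (hU : U ∈ Matrix.unitaryGroup (Fin n) ℝ) :
    (1 : Matrix (Fin n) (Fin n) ℝ) = U * 1 * star U := by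
  rw [Matrix.mul_one, (Matrix.mem_unitaryGroup_iff).mp hU]

end conj

section spec

variable {Ω : Matrix (Fin n) (Fin n) ℝ} (hΩ : Ω.PosDef)

lemma hUmem : (hΩ.1.eigenvectorUnitary : Matrix (Fin n) (Fin n) ℝ) ∈
    Matrix.unitaryGroup (Fin n) ℝ := hΩ.1.eigenvectorUnitary.2

lemma spec : Ω = (hΩ.1.eigenvectorUnitary : Matrix (Fin n) (Fin n) ℝ)
    * Matrix.diagonal hΩ.1.eigenvalues
    * star (hΩ.1.eigenvectorUnitary : Matrix (Fin n) (Fin n) ℝ) := by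
  have := hΩ.1.spectral_theorem
  simpa [RCLike.ofReal_real_eq_id] using this

lemma sub_smul_spec (θ : ℝ) :
    Ω - θ • (1 : Matrix (Fin n) (Fin n) ℝ)
      = (hΩ.1.eigenvectorUnitary : Matrix (Fin n) (Fin n) ℝ)
        * Matrix.diagonal (fun i => hΩ.1.eigenvalues i - θ)
        * star (hΩ.1.eigenvectorUnitary : Matrix (Fin n) (Fin n) ℝ) := by
  conv_lhs => rw [spec hΩ, conj_one (hUmem hΩ)]
  rw [← Matrix.diagonal_one (n := Fin n) (α := ℝ)]
  rw [← Matrix.smul_mul, ← Matrix.mul_smul, ← Matrix.diagonal_smul, ← Matrix.sub_mul,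
    ← Matrix.mul_sub, Matrix.diagonal_sub]
  congr 1
  ext i
  simp

lemma inv_spec : Ω⁻¹ = (hΩ.1.eigenvectorUnitary : Matrix (Fin n) (Fin n) ℝ)
    * Matrix.diagonal (fun i => (hΩ.1.eigenvalues i)⁻¹)
    * star (hΩ.1.eigenvectorUnitary : Matrix (Fin n) (Fin n) ℝ) := by
  conv_lhs => rw [spec hΩ]
  exact conj_inv (hUmem hΩ) (fun i => (hΩ.eigenvalues_pos i).ne')

lemma one_sub_smul_inv_spec (θ : ℝ) :
    (1 : Matrix (Fin n) (Fin n) ℝ) - θ • Ω⁻¹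
      = (hΩ.1.eigenvectorUnitary : Matrix (Fin n) (Fin n) ℝ)
        * Matrix.diagonal (fun i => 1 - θ * (hΩ.1.eigenvalues i)⁻¹)
        * star (hΩ.1.eigenvectorUnitary : Matrix (Fin n) (Fin n) ℝ) := by
  conv_lhs => rw [inv_spec hΩ, conj_one (hUmem hΩ)]
  rw [← Matrix.diagonal_one (n := Fin n) (α := ℝ)]
  rw [← Matrix.smul_mul, ← Matrix.mul_smul, ← Matrix.diagonal_smul, ← Matrix.sub_mul,
    ← Matrix.mul_sub, Matrix.diagonal_sub]
  simp only [Pi.smul_apply, smul_eq_mul]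

/-- θ is below every eigenvalue when Ω - θ•1 is PD. -/
lemma lt_eigenvalues {Ω : Matrix (Fin n) (Fin n) ℝ} (hΩ : Ω.PosDef) {θ : ℝ}
    (hpd : (Ω - θ • (1 : Matrix (Fin n) (Fin n) ℝ)).PosDef) :
    ∀ i, θ < hΩ.1.eigenvalues i := by
  intro i
  set v : (Fin n) → ℝ := ⇑(hΩ.1.eigenvectorBasis i) with hv
  have hv0 : v ≠ 0 := by
    have := hΩ.1.eigenvectorBasis.orthonormal.ne_zero i
    simpa [hv] using fun h => this (by simpa using h)
  have hmv : (Ω - θ • (1 : Matrix (Fin n) (Fin n) ℝ)) *ᵥ v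
      = (hΩ.1.eigenvalues i - θ) • v := by
    rw [Matrix.sub_mulVec, Matrix.smul_mulVec, Matrix.one_mulVec,
      hΩ.1.mulVec_eigenvectorBasis, sub_smul]
  have hpos := hpd.dotProduct_mulVec_pos hv0
  rw [hmv] at hpos
  have hdot : star v ⬝ᵥ ((hΩ.1.eigenvalues i - θ) • v)
      = (hΩ.1.eigenvalues i - θ) * (v ⬝ᵥ v) := by
    rw [dotProduct_smul]
    simp [star_trivial, smul_eq_mul]
  rw [hdot] at hpos
  have hvv : 0 < v ⬝ᵥ v := by
    rcases Function.ne_iff.mp hv0 with ⟨j, hj⟩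
    have hj' : 0 < v j * v j := mul_self_pos.mpr hj
    simp only [dotProduct]
    exact Finset.sum_pos' (fun k _ => mul_self_nonneg (v k)) ⟨j, Finset.mem_univ j, hj'⟩
  have : (0:ℝ) < (hΩ.1.eigenvalues i - θ) * (v ⬝ᵥ v) := by simpa using hpos
  nlinarith

lemma gamma_eq_sum {Ω : Matrix (Fin n) (Fin n) ℝ} (hΩ : Ω.PosDef) {θ : ℝ}
    (h : ∀ i, θ < hΩ.1.eigenvalues i) :
    gammaFn Ω θ = (1/2) * ∑ i, phi (hΩ.1.eigenvalues i) θ := by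
  set lam := hΩ.1.eigenvalues with hlam
  set e : Fin n → ℝ := fun i => 1 - θ * (lam i)⁻¹ with he
  have hlpos : ∀ i, 0 < lam i := fun i => hΩ.eigenvalues_pos i
  have hepos : ∀ i, 0 < e i := by
    intro i
    have := one_sub_div_pos (hlpos i) (h i)
    simpa [he, div_eq_mul_inv] using this
  have hspec := one_sub_smul_inv_spec hΩ θ
  have hU := hUmem hΩ
  have hinv : (1 - θ • Ω⁻¹)⁻¹ = (hΩ.1.eigenvectorUnitary : Matrix (Fin n) (Fin n) ℝ)
      * Matrix.diagonal (fun i => (e i)⁻¹)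
      * star (hΩ.1.eigenvectorUnitary : Matrix (Fin n) (Fin n) ℝ) := by
    rw [hspec]; exact conj_inv hU (fun i => (hepos i).ne')
  have htr : Matrix.trace ((1 - θ • Ω⁻¹)⁻¹ - 1) = (∑ i, (e i)⁻¹) - n := by
    rw [Matrix.trace_sub, hinv, trace_conj hU, Matrix.trace_diagonal, Matrix.trace_one]
    simp
  have hdet : (1 - θ • Ω⁻¹).det = ∏ i, e i := by
    rw [hspec, det_conj hU, Matrix.det_diagonal]
  have hlog : Real.log ((1 - θ • Ω⁻¹).det) = ∑ i, Real.log (e i) := by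
    rw [hdet, Real.log_prod (fun i _ => (hepos i).ne')]
  have hphi : ∀ i, phi (lam i) θ = (e i)⁻¹ - 1 + Real.log (e i) := by
    intro i
    simp [phi, he, div_eq_mul_inv]
  rw [gammaFn, htr, hlog]
  rw [Finset.sum_congr rfl (fun i _ => hphi i)]
  rw [Finset.sum_add_distrib, Finset.sum_sub_distrib]
  simp [Finset.card_univ]

lemma trace_inv_sq {Ω : Matrix (Fin n) (Fin n) ℝ} (hΩ : Ω.PosDef) {θ : ℝ}
    (h : ∀ i, θ < hΩ.1.eigenvalues i) :
    Matrix.trace ((Ω - θ • (1 : Matrix (Fin n) (Fin n) ℝ))⁻¹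
        * (Ω - θ • (1 : Matrix (Fin n) (Fin n) ℝ))⁻¹)
      = ∑ i, ((hΩ.1.eigenvalues i - θ)^2)⁻¹ := by
  have hU := hUmem hΩ
  have hne : ∀ i, hΩ.1.eigenvalues i - θ ≠ 0 := fun i => (sub_pos.2 (h i)).ne'
  rw [sub_smul_spec hΩ θ, conj_inv hU hne, conj_mul_conj hU, trace_conj hU,
    Matrix.diagonal_mul_diagonal, Matrix.trace_diagonal]
  refine Finset.sum_congr rfl fun i _ => ?_
  rw [sq, mul_inv]

end spec

section psd

lemma psd_trace_nonneg {M : Matrix (Fin n) (Fin n) ℝ} (hM : M.PosSemidef) :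
    0 ≤ Matrix.trace M := by
  rw [Matrix.trace]
  refine Finset.sum_nonneg fun i _ => ?_
  have := hM.dotProduct_mulVec_nonneg (Pi.single i 1)
  simpa [Matrix.diag, dotProduct, Pi.single_apply, Matrix.mulVec, Finset.sum_ite_eq]
    using this

open scoped MatrixOrder in
lemma trace_mul_psd_nonneg {P Q : Matrix (Fin n) (Fin n) ℝ}
    (hP : P.PosSemidef) (hQ : Q.PosSemidef) : 0 ≤ Matrix.trace (P * Q) := by
  have hS : CFC.sqrt P * CFC.sqrt P = P := CFC.sqrt_mul_sqrt_self P hP.nonneg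
  have hSH : (CFC.sqrt P).conjTranspose = CFC.sqrt P := (CFC.sqrt_nonneg P).posSemidef.isHermitian
  have h1 : Matrix.trace (CFC.sqrt P * CFC.sqrt P * Q) = Matrix.trace (CFC.sqrt P * Q * CFC.sqrt P) := by
    rw [Matrix.mul_assoc, Matrix.trace_mul_comm, Matrix.mul_assoc]
  rw [hS] at h1
  rw [h1]
  have := hQ.conjTranspose_mul_mul_same (CFC.sqrt P)
  rw [hSH] at this
  exact psd_trace_nonneg this

lemma inv_antitone {A B : Matrix (Fin n) (Fin n) ℝ} (hA : A.PosDef) (hB : B.PosDef)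
    (hBA : (B - A).PosSemidef) : (A⁻¹ - B⁻¹).PosSemidef := by
  have hAd : IsUnit A.det := isUnit_iff_ne_zero.mpr hA.det_pos.ne'
  have hBd : IsUnit B.det := isUnit_iff_ne_zero.mpr hB.det_pos.ne'
  have hA1 : A * A⁻¹ = 1 := Matrix.mul_nonsing_inv _ hAd
  have hA2 : A⁻¹ * A = 1 := Matrix.nonsing_inv_mul _ hAd
  have hB1 : B * B⁻¹ = 1 := Matrix.mul_nonsing_inv _ hBd
  have hB2 : B⁻¹ * B = 1 := Matrix.nonsing_inv_mul _ hBd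
  set C := B - A with hC
  have key : A⁻¹ - B⁻¹ = B⁻¹ * C * B⁻¹ + B⁻¹ * (C * A⁻¹ * C) * B⁻¹ := by
    have e2 : B * (A⁻¹ - B⁻¹) * B = C + C * A⁻¹ * C := by
      simp only [hC, Matrix.mul_sub, Matrix.sub_mul, Matrix.add_mul, Matrix.mul_add,
        Matrix.mul_assoc, hA2, hB2, hA1, hB1, Matrix.mul_one, Matrix.one_mul]
      abel
    calc A⁻¹ - B⁻¹ = B⁻¹ * (B * (A⁻¹ - B⁻¹) * B) * B⁻¹ := by
          simp only [Matrix.mul_assoc, hB1, Matrix.mul_one]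
          rw [← Matrix.mul_assoc, hB2, Matrix.one_mul]
      _ = B⁻¹ * (C + C * A⁻¹ * C) * B⁻¹ := by rw [e2]
      _ = B⁻¹ * C * B⁻¹ + B⁻¹ * (C * A⁻¹ * C) * B⁻¹ := by
          rw [Matrix.mul_add, Matrix.add_mul]
  rw [key]
  have hBiH : (B⁻¹).conjTranspose = B⁻¹ := hB.isHermitian.inv
  have hCH : C.conjTranspose = C := hBA.isHermitian
  have t1 : (B⁻¹ * C * B⁻¹).PosSemidef := by
    have := hBA.conjTranspose_mul_mul_same (B := B⁻¹)
    rwa [hBiH] at this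
  have t2 : (B⁻¹ * (C * A⁻¹ * C) * B⁻¹).PosSemidef := by
    have := (hA.inv.posSemidef).conjTranspose_mul_mul_same (B := C * B⁻¹)
    have hct : (C * B⁻¹).conjTranspose = B⁻¹ * C := by
      rw [Matrix.conjTranspose_mul, hBiH, hCH]
    rw [hct] at this
    have e : B⁻¹ * (C * A⁻¹ * C) * B⁻¹ = B⁻¹ * C * A⁻¹ * (C * B⁻¹) := by
      simp only [Matrix.mul_assoc]
    rw [e]; exact this
  exact t1.add t2

lemma trace_sq_le {X Y : Matrix (Fin n) (Fin n) ℝ} (hX : X.PosSemidef) (hY : Y.PosSemidef)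
    (hXY : (Y - X).PosSemidef) : Matrix.trace (X * X) ≤ Matrix.trace (Y * Y) := by
  have h1 : 0 ≤ Matrix.trace ((Y - X) * (Y + X)) :=
    trace_mul_psd_nonneg hXY (hY.add hX)
  have h2 : Matrix.trace ((Y - X) * (Y + X))
      = Matrix.trace (Y * Y) - Matrix.trace (X * X)
        + (Matrix.trace (Y * X) - Matrix.trace (X * Y)) := by
    simp only [Matrix.sub_mul, Matrix.mul_add, Matrix.trace_sub, Matrix.trace_add]
    ring
  rw [Matrix.trace_mul_comm X Y] at h2
  simp only [sub_self, add_zero] at h2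
  linarith

end psd

end Stmt7Aux

theorem stmt7 {n : ℕ} (Ω₁ Ω₂ : Matrix (Fin n) (Fin n) ℝ)
    (h₁ : Ω₁.PosDef) (h₂ : Ω₂.PosDef)
    (h21 : (Ω₁ - Ω₂).PosSemidef) (b : ℝ) (hb : 0 < b)
    (θ₁ θ₂ : ℝ) (hθ₁ : 0 < θ₁) (hθ₂ : 0 < θ₂)
    (hpd₁ : (Ω₁ - θ₁ • (1 : Matrix (Fin n) (Fin n) ℝ)).PosDef)
    (hpd₂ : (Ω₂ - θ₂ • (1 : Matrix (Fin n) (Fin n) ℝ)).PosDef)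
    (hg₁ : gammaFn Ω₁ θ₁ = b) (hg₂ : gammaFn Ω₂ θ₂ = b) :
    θ₂ ≤ θ₁ := by
  rcases Nat.eq_zero_or_pos n with hn | hn
  · exfalso
    subst hn
    have h0 : gammaFn Ω₁ θ₁ = 0 := by
      simp [gammaFn, Matrix.trace_fin_zero, Matrix.det_isEmpty]
    rw [hg₁] at h0; linarith
  · by_contra hcon
    push_neg at hcon
    set lam := h₁.1.eigenvalues with hlamdef
    set mu := h₂.1.eigenvalues with hmudef
    have smul_one_psd : ∀ c : ℝ, 0 ≤ c →
        (c • (1 : Matrix (Fin n) (Fin n) ℝ)).PosSemidef := by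
      intro c hc
      have : c • (1 : Matrix (Fin n) (Fin n) ℝ) = Matrix.diagonal (fun _ => c) := by
        ext i j
        by_cases h : i = j <;>
          simp [h, Matrix.one_apply, Matrix.diagonal_apply]
      rw [this]
      exact Matrix.PosSemidef.diagonal (fun i => hc)
    have hpd12 : (Ω₁ - θ₂ • (1 : Matrix (Fin n) (Fin n) ℝ)).PosDef := by
      have he : Ω₁ - θ₂ • (1 : Matrix (Fin n) (Fin n) ℝ)
          = (Ω₁ - Ω₂) + (Ω₂ - θ₂ • (1 : Matrix (Fin n) (Fin n) ℝ)) := by abel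
      rw [he]; exact Matrix.PosDef.posSemidef_add h21 hpd₂
    have hlamθ₂ : ∀ i, θ₂ < lam i := Stmt7Aux.lt_eigenvalues h₁ hpd12
    have hmuθ₂ : ∀ i, θ₂ < mu i := Stmt7Aux.lt_eigenvalues h₂ hpd₂
    have hlamθ₁ : ∀ i, θ₁ < lam i := Stmt7Aux.lt_eigenvalues h₁ hpd₁
    have hlam0 : ∀ i, 0 < lam i := fun i => h₁.eigenvalues_pos i
    have hmu0 : ∀ i, 0 < mu i := fun i => h₂.eigenvalues_pos i
    have r1 : gammaFn Ω₁ θ₁ = (1/2) * ∑ i, phi (lam i) θ₁ :=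
      Stmt7Aux.gamma_eq_sum h₁ hlamθ₁
    have r2 : gammaFn Ω₂ θ₂ = (1/2) * ∑ i, phi (mu i) θ₂ :=
      Stmt7Aux.gamma_eq_sum h₂ hmuθ₂
    have s1 : ∑ i, phi (lam i) θ₁ < ∑ i, phi (lam i) θ₂ :=
      Stmt7Aux.sum_phi_lt lam hn hlam0 hθ₁ hcon hlamθ₂
    have hcmp : ∀ θ ∈ Set.Ioo (0:ℝ) θ₂,
        ∑ i, ((lam i - θ)^2)⁻¹ ≤ ∑ i, ((mu i - θ)^2)⁻¹ := by
      intro θ hθ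
      have hpd2θ : (Ω₂ - θ • (1 : Matrix (Fin n) (Fin n) ℝ)).PosDef := by
        have he : Ω₂ - θ • (1 : Matrix (Fin n) (Fin n) ℝ)
            = (Ω₂ - θ₂ • (1 : Matrix (Fin n) (Fin n) ℝ))
              + (θ₂ - θ) • (1 : Matrix (Fin n) (Fin n) ℝ) := by
          rw [sub_smul]; abel
        rw [he]
        exact hpd₂.add_posSemidef (smul_one_psd _ (by linarith [hθ.2]))
      have hpd1θ : (Ω₁ - θ • (1 : Matrix (Fin n) (Fin n) ℝ)).PosDef := by
        have he : Ω₁ - θ • (1 : Matrix (Fin n) (Fin n) ℝ)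
            = (Ω₁ - Ω₂) + (Ω₂ - θ • (1 : Matrix (Fin n) (Fin n) ℝ)) := by abel
        rw [he]; exact Matrix.PosDef.posSemidef_add h21 hpd2θ
      have e1 := Stmt7Aux.trace_inv_sq h₁ (Stmt7Aux.lt_eigenvalues h₁ hpd1θ)
      have e2 := Stmt7Aux.trace_inv_sq h₂ (Stmt7Aux.lt_eigenvalues h₂ hpd2θ)
      rw [← e1, ← e2]
      have hdiff : (Ω₁ - θ • (1 : Matrix (Fin n) (Fin n) ℝ))
          - (Ω₂ - θ • (1 : Matrix (Fin n) (Fin n) ℝ)) = Ω₁ - Ω₂ := by abel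
      exact Stmt7Aux.trace_sq_le hpd1θ.inv.posSemidef hpd2θ.inv.posSemidef
        (Stmt7Aux.inv_antitone hpd2θ hpd1θ (hdiff ▸ h21))
    have s2 : ∑ i, phi (lam i) θ₂ ≤ ∑ i, phi (mu i) θ₂ :=
      Stmt7Aux.sum_phi_le lam mu hθ₂ hlam0 hmu0 hlamθ₂ hmuθ₂ hcmp
    rw [r1] at hg₁
    rw [r2] at hg₂
    linarith
end
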